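/- Let O be an open subset of ℝ^n and let σ_1, σ_2 : O → ℝ be twice continuously differentiable with σ_1 > 0 and σ_2 > 0 on O. Define a = (σ_1 σ_2)^{1/2}, w = ln(σ_1/σ_2), and q_j = Δ(σ_j^{1/2}) / σ_j^{1/2} for j = 1, 2. Then the identity div(a ∇w) = 2a(q_1 - q_2) holds pointwise on O. -/

import Mathlib

/-- The divergence of a vector field `F : ℝⁿ → ℝⁿ`: `div F (x) = Σᵢ ∂ᵢFᵢ(x)`. -/
noncomputable def ediv {n : ℕ} (F : EuclideanSpace ℝ (Fin n) → EuclideanSpace ℝ (Fin n))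
    (x : EuclideanSpace ℝ (Fin n)) : ℝ :=
  ∑ i, fderiv ℝ F x (EuclideanSpace.single i 1) i

/-- The Laplacian of `f : ℝⁿ → ℝ`: `Δf = div(∇f)`. -/
noncomputable def lap {n : ℕ} (f : EuclideanSpace ℝ (Fin n) → ℝ)
    (x : EuclideanSpace ℝ (Fin n)) : ℝ :=
  ediv (gradient f) x

open Real InnerProductSpace

lemma grad_apply {n : ℕ} (f : EuclideanSpace ℝ (Fin n) → ℝ) (x : EuclideanSpace ℝ (Fin n))
    (i : Fin n) :
    gradient f x i = fderiv ℝ f x (EuclideanSpace.single i 1) := by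
  have h : gradient f x = (toDual ℝ (EuclideanSpace ℝ (Fin n))).symm (fderiv ℝ f x) := rfl
  have h2 : (inner ℝ (gradient f x) (EuclideanSpace.single i (1:ℝ)) : ℝ)
      = fderiv ℝ f x (EuclideanSpace.single i 1) := by
    rw [h, toDual_symm_apply]
  rw [EuclideanSpace.inner_single_right] at h2
  simpa using h2

lemma hasfderiv_grad {n : ℕ} {f : EuclideanSpace ℝ (Fin n) → ℝ} {x : EuclideanSpace ℝ (Fin n)}
    {L : EuclideanSpace ℝ (Fin n) →L[ℝ] ℝ} (hf : HasFDerivAt f L x) :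
    gradient f x = (toDual ℝ (EuclideanSpace ℝ (Fin n))).symm L := by
  unfold gradient; rw [hf.fderiv]

lemma ediv_congr_nhds {n : ℕ} {F G : EuclideanSpace ℝ (Fin n) → EuclideanSpace ℝ (Fin n)}
    {x : EuclideanSpace ℝ (Fin n)} (h : F =ᶠ[nhds x] G) : ediv F x = ediv G x := by
  unfold ediv; rw [h.fderiv_eq]

lemma ediv_sub {n : ℕ} {A B : EuclideanSpace ℝ (Fin n) → EuclideanSpace ℝ (Fin n)}
    {x : EuclideanSpace ℝ (Fin n)} (hA : DifferentiableAt ℝ A x) (hB : DifferentiableAt ℝ B x) :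
    ediv (fun y => A y - B y) x = ediv A x - ediv B x := by
  unfold ediv
  rw [fderiv_fun_sub hA hB]
  simp [Finset.sum_sub_distrib]

lemma ediv_smul_vf {n : ℕ} (c : EuclideanSpace ℝ (Fin n) → ℝ)
    (V : EuclideanSpace ℝ (Fin n) → EuclideanSpace ℝ (Fin n)) (x : EuclideanSpace ℝ (Fin n))
    (hc : DifferentiableAt ℝ c x) (hV : DifferentiableAt ℝ V x) :
    ediv (fun y => c y • V y) x
      = (∑ i, fderiv ℝ c x (EuclideanSpace.single i 1) * V x i) + c x * ediv V x := by
  unfold ediv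
  rw [fderiv_fun_smul hc hV]
  rw [Finset.mul_sum, ← Finset.sum_add_distrib]
  congr 1; ext i
  simp [ContinuousLinearMap.smulRight_apply]
  ring


/-- With `a = √(σ₁σ₂)`, `w = ln(σ₁/σ₂)` and `q_j = Δ(√σ_j)/√σ_j`, the identity
`div(a ∇w) = 2a(q₁ - q₂)` holds pointwise on the open set `O` where `σ₁, σ₂` are positive
and `C²`. -/
theorem div_a_grad_w_identity (n : ℕ) (O : Set (EuclideanSpace ℝ (Fin n))) (hO : IsOpen O)
    (σ₁ σ₂ : EuclideanSpace ℝ (Fin n) → ℝ)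
    (hσ₁ : ContDiffOn ℝ 2 σ₁ O) (hσ₂ : ContDiffOn ℝ 2 σ₂ O)
    (hpos₁ : ∀ x ∈ O, 0 < σ₁ x) (hpos₂ : ∀ x ∈ O, 0 < σ₂ x) :
    ∀ x ∈ O,
      ediv (fun y => Real.sqrt (σ₁ y * σ₂ y) •
          gradient (fun z => Real.log (σ₁ z / σ₂ z)) y) x
        = 2 * Real.sqrt (σ₁ x * σ₂ x) *
            (lap (fun z => Real.sqrt (σ₁ z)) x / Real.sqrt (σ₁ x)
              - lap (fun z => Real.sqrt (σ₂ z)) x / Real.sqrt (σ₂ x)) := by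
  intro x hx
  have hOx : O ∈ nhds x := hO.mem_nhds hx
  have h1 := hpos₁ x hx
  have h2 := hpos₂ x hx
  -- pointwise identity on O
  have key : ∀ y ∈ O,
      Real.sqrt (σ₁ y * σ₂ y) • gradient (fun z => Real.log (σ₁ z / σ₂ z)) y
        = (2 * Real.sqrt (σ₂ y)) • gradient (fun z => Real.sqrt (σ₁ z)) y
          - (2 * Real.sqrt (σ₁ y)) • gradient (fun z => Real.sqrt (σ₂ z)) y := by
    intro y hy
    have h1y := hpos₁ y hy
    have h2y := hpos₂ y hy
    have hd1 : DifferentiableAt ℝ σ₁ y :=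
      (hσ₁.contDiffAt (hO.mem_nhds hy)).differentiableAt (by norm_num)
    have hd2 : DifferentiableAt ℝ σ₂ y :=
      (hσ₂.contDiffAt (hO.mem_nhds hy)).differentiableAt (by norm_num)
    have Hu₁ : HasFDerivAt (fun z => Real.sqrt (σ₁ z))
        ((1 / (2 * Real.sqrt (σ₁ y))) • fderiv ℝ σ₁ y) y :=
      hd1.hasFDerivAt.sqrt h1y.ne'
    have Hu₂ : HasFDerivAt (fun z => Real.sqrt (σ₂ z))
        ((1 / (2 * Real.sqrt (σ₂ y))) • fderiv ℝ σ₂ y) y :=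
      hd2.hasFDerivAt.sqrt h2y.ne'
    have Hlog : HasFDerivAt (fun z => Real.log (σ₁ z / σ₂ z))
        ((σ₁ y)⁻¹ • fderiv ℝ σ₁ y - (σ₂ y)⁻¹ • fderiv ℝ σ₂ y) y := by
      have H1 : HasFDerivAt (fun z => Real.log (σ₁ z)) ((σ₁ y)⁻¹ • fderiv ℝ σ₁ y) y :=
        hd1.hasFDerivAt.log h1y.ne'
      have H2 : HasFDerivAt (fun z => Real.log (σ₂ z)) ((σ₂ y)⁻¹ • fderiv ℝ σ₂ y) y :=
        hd2.hasFDerivAt.log h2y.ne'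
      apply (H1.sub H2).congr_of_eventuallyEq
      filter_upwards [hO.mem_nhds hy] with z hz
      rw [Real.log_div (hpos₁ z hz).ne' (hpos₂ z hz).ne']; rfl
    rw [hasfderiv_grad Hu₁, hasfderiv_grad Hu₂, hasfderiv_grad Hlog]
    rw [map_sub, map_smul, map_smul]
    have hs : Real.sqrt (σ₁ y * σ₂ y) = Real.sqrt (σ₁ y) * Real.sqrt (σ₂ y) :=
      Real.sqrt_mul h1y.le _
    have e1 : Real.sqrt (σ₁ y) ^ 2 = σ₁ y := Real.sq_sqrt h1y.le
    have e2 : Real.sqrt (σ₂ y) ^ 2 = σ₂ y := Real.sq_sqrt h2y.le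
    have n1 : Real.sqrt (σ₁ y) ≠ 0 := (Real.sqrt_pos.mpr h1y).ne'
    have n2 : Real.sqrt (σ₂ y) ≠ 0 := (Real.sqrt_pos.mpr h2y).ne'
    rw [hs]
    simp only [map_sub, map_smul, smul_sub, smul_smul]
    congr 1
    · congr 1
      field_simp
      linear_combination e1
    · congr 1
      field_simp
      linear_combination e2
  -- replace F by G under ediv
  have hE : ediv (fun y => Real.sqrt (σ₁ y * σ₂ y) •
          gradient (fun z => Real.log (σ₁ z / σ₂ z)) y) x
      = ediv (fun y => (2 * Real.sqrt (σ₂ y)) • gradient (fun z => Real.sqrt (σ₁ z)) y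
          - (2 * Real.sqrt (σ₁ y)) • gradient (fun z => Real.sqrt (σ₂ z)) y) x :=
    ediv_congr_nhds (Filter.eventuallyEq_of_mem hOx key)
  rw [hE]
  -- differentiability facts at x
  have hc₁ : ContDiffAt ℝ 2 (fun z => Real.sqrt (σ₁ z)) x :=
    (Real.contDiffAt_sqrt h1.ne').comp x (hσ₁.contDiffAt hOx)
  have hc₂ : ContDiffAt ℝ 2 (fun z => Real.sqrt (σ₂ z)) x :=
    (Real.contDiffAt_sqrt h2.ne').comp x (hσ₂.contDiffAt hOx)
  have hgd₁ : DifferentiableAt ℝ (gradient (fun z => Real.sqrt (σ₁ z))) x := by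
    have hf : ContDiffAt ℝ 1 (fderiv ℝ (fun z => Real.sqrt (σ₁ z))) x :=
      hc₁.fderiv_right (by norm_num)
    exact ((toDual ℝ (EuclideanSpace ℝ (Fin n))).symm.differentiableAt).comp x
      (hf.differentiableAt one_ne_zero)
  have hgd₂ : DifferentiableAt ℝ (gradient (fun z => Real.sqrt (σ₂ z))) x := by
    have hf : ContDiffAt ℝ 1 (fderiv ℝ (fun z => Real.sqrt (σ₂ z))) x :=
      hc₂.fderiv_right (by norm_num)
    exact ((toDual ℝ (EuclideanSpace ℝ (Fin n))).symm.differentiableAt).comp x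
      (hf.differentiableAt one_ne_zero)
  have hdu₁ : DifferentiableAt ℝ (fun z => Real.sqrt (σ₁ z)) x :=
    hc₁.differentiableAt (by norm_num)
  have hdu₂ : DifferentiableAt ℝ (fun z => Real.sqrt (σ₂ z)) x :=
    hc₂.differentiableAt (by norm_num)
  have hdc₁ : DifferentiableAt ℝ (fun y => 2 * Real.sqrt (σ₁ y)) x := hdu₁.const_mul 2
  have hdc₂ : DifferentiableAt ℝ (fun y => 2 * Real.sqrt (σ₂ y)) x := hdu₂.const_mul 2
  rw [ediv_sub (A := fun y => (2 * Real.sqrt (σ₂ y)) • gradient (fun z => Real.sqrt (σ₁ z)) y)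
      (B := fun y => (2 * Real.sqrt (σ₁ y)) • gradient (fun z => Real.sqrt (σ₂ z)) y)
      (hdc₂.smul hgd₁) (hdc₁.smul hgd₂),
    ediv_smul_vf (fun y => 2 * Real.sqrt (σ₂ y)) _ x hdc₂ hgd₁,
    ediv_smul_vf (fun y => 2 * Real.sqrt (σ₁ y)) _ x hdc₁ hgd₂]
  have hsum : (∑ i, fderiv ℝ (fun y => 2 * Real.sqrt (σ₂ y)) x (EuclideanSpace.single i 1) *
        gradient (fun z => Real.sqrt (σ₁ z)) x i)
      = ∑ i, fderiv ℝ (fun y => 2 * Real.sqrt (σ₁ y)) x (EuclideanSpace.single i 1) *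
        gradient (fun z => Real.sqrt (σ₂ z)) x i := by
    rw [fderiv_const_mul hdu₂ 2, fderiv_const_mul hdu₁ 2]
    apply Finset.sum_congr rfl
    intro i _
    rw [grad_apply, grad_apply]
    simp
    ring
  rw [hsum]
  have hed₁ : ediv (gradient (fun z => Real.sqrt (σ₁ z))) x
      = lap (fun z => Real.sqrt (σ₁ z)) x := rfl
  have hed₂ : ediv (gradient (fun z => Real.sqrt (σ₂ z))) x
      = lap (fun z => Real.sqrt (σ₂ z)) x := rfl
  rw [hed₁, hed₂]
  have hs : Real.sqrt (σ₁ x * σ₂ x) = Real.sqrt (σ₁ x) * Real.sqrt (σ₂ x) :=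
    Real.sqrt_mul h1.le _
  have n1 : Real.sqrt (σ₁ x) ≠ 0 := (Real.sqrt_pos.mpr h1).ne'
  have n2 : Real.sqrt (σ₂ x) ≠ 0 := (Real.sqrt_pos.mpr h2).ne'
  rw [hs]
  field_simp
  ring
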